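/- Monotonicity of redundant information: for a probability mass function p on 𝒳 × 𝒴 × 𝒲 × 𝒵, I_red(Z;X,Y) ≤ I_red(Z;X,(Y,W)), where on the right (Y,W) is treated as a single variable. -/

import Mathlib

open scoped BigOperators

/-- `p` is a probability mass function on a finite type. -/
def IsPMF {α : Type*} [Fintype α] (p : α → ℝ) : Prop :=
  (∀ a, 0 ≤ p a) ∧ ∑ a, p a = 1

/-- Kullback–Leibler divergence `D(u‖v) = Σ u log (u/v)` (with the convention `0 log 0 = 0`),
`⊤` if absolute continuity fails, i.e. if `u a > 0 = v a` for some `a`. -/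
noncomputable def klDiv {α : Type*} [Fintype α] (u v : α → ℝ) : EReal :=
  if ∀ a, 0 < u a → 0 < v a then ((∑ a, u a * Real.log (u a / v a) : ℝ) : EReal) else ⊤

variable {𝓧 𝓨 𝓦 𝓩 : Type*} [Fintype 𝓧] [Fintype 𝓨] [Fintype 𝓦] [Fintype 𝓩]

lemma klDiv_of_ac {α : Type*} [Fintype α] {u v : α → ℝ} (h : ∀ a, 0 < u a → 0 < v a) :
    klDiv u v = ((∑ a, u a * Real.log (u a / v a) : ℝ) : EReal) := if_pos h

lemma ac_of_ne_top {α : Type*} [Fintype α] {u v : α → ℝ} (h : klDiv u v ≠ ⊤) :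
    ∀ a, 0 < u a → 0 < v a := by
  by_contra hc
  exact h (if_neg hc)

lemma klDiv_nonneg {α : Type*} [Fintype α] {u v : α → ℝ}
    (hu0 : ∀ a, 0 ≤ u a) (hu1 : ∑ a, u a = 1) (hv0 : ∀ a, 0 ≤ v a) (hv1 : ∑ a, v a ≤ 1) :
    (0 : EReal) ≤ klDiv u v := by
  unfold klDiv
  split
  · rename_i hac
    have key : ∀ a, u a - v a ≤ u a * Real.log (u a / v a) := by
      intro a
      rcases eq_or_lt_of_le (hu0 a) with h | h
      · simp [← h, hv0 a]
      · have hva := hac a h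
        have hlog : Real.log (v a / u a) ≤ v a / u a - 1 := Real.log_le_sub_one_of_pos (by positivity)
        have hinv : Real.log (u a / v a) = - Real.log (v a / u a) := by
          rw [← Real.log_inv, inv_div]
        rw [hinv]
        have h2 : u a * Real.log (v a / u a) ≤ u a * (v a / u a - 1) :=
          mul_le_mul_of_nonneg_left hlog h.le
        have h3 : u a * (v a / u a - 1) = v a - u a := by field_simp
        nlinarith
    have : (1 : ℝ) - ∑ a, v a ≤ ∑ a, u a * Real.log (u a / v a) := by
      rw [← hu1, ← Finset.sum_sub_distrib]
      exact Finset.sum_le_sum fun a _ => key a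
    have h0 : (0:ℝ) ≤ ∑ a, u a * Real.log (u a / v a) := by linarith
    exact_mod_cast h0
  · exact le_top

lemma klDiv_sub {α : Type*} [Fintype α] {u q m : α → ℝ} (hu0 : ∀ a, 0 ≤ u a)
    (hq : ∀ a, 0 < u a → 0 < q a) (hm : ∀ a, 0 < u a → 0 < m a) :
    (klDiv u m).toReal - (klDiv u q).toReal = ∑ a, u a * Real.log (q a / m a) := by
  rw [klDiv_of_ac hm, klDiv_of_ac hq, EReal.toReal_coe, EReal.toReal_coe,
    ← Finset.sum_sub_distrib]
  refine Finset.sum_congr rfl fun a _ => ?_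
  rcases eq_or_lt_of_le (hu0 a) with h | h
  · simp [← h]
  · have hqa := hq a h
    have hma := hm a h
    rw [← mul_sub, Real.log_div h.ne' hma.ne', Real.log_div h.ne' hqa.ne',
      Real.log_div hqa.ne' hma.ne']
    ring

lemma mem_hull_of_rep {𝓩 : Type*} [Fintype 𝓩] {ι : Type*} [Fintype ι] {S : Set (𝓩 → ℝ)}
    {g : ι → ℝ} {f : ι → 𝓩 → ℝ} {v : 𝓩 → ℝ}
    (hg0 : ∀ i, 0 ≤ g i) (hg1 : ∑ i, g i = 1)
    (hfS : ∀ i, 0 < g i → f i ∈ S)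
    (hv : ∀ z, v z = ∑ i, g i * f i z) :
    v ∈ convexHull ℝ S := by
  set t := Finset.univ.filter fun i => 0 < g i with ht
  have hgz : ∀ i ∈ Finset.univ, i ∉ t → g i = 0 := by
    intro i _ hi
    simp only [ht, Finset.mem_filter, Finset.mem_univ, true_and, not_lt] at hi
    exact le_antisymm hi (hg0 i)
  have hsum : ∑ i ∈ t, g i = 1 := by
    rw [← hg1]
    exact (Finset.sum_subset (Finset.filter_subset _ _) (fun i hi h2 => hgz i hi h2))
  have h := Finset.centerMass_mem_convexHull t (fun i _ => hg0 i)
      (by rw [hsum]; norm_num) (z := f) (fun i hi => hfS i (by simpa [ht] using hi))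
  suffices hv2 : v = t.centerMass g f by rwa [hv2]
  rw [Finset.centerMass, hsum, inv_one, one_smul]
  funext z
  rw [hv z]
  have h2 : (∑ i ∈ t, g i • f i) z = ∑ i ∈ t, g i * f i z := by
    rw [Finset.sum_apply]; rfl
  rw [h2]
  exact (Finset.sum_subset (Finset.filter_subset _ _)
    (fun i hi hni => by rw [hgz i hi hni, zero_mul])).symm


lemma hull_pmf {𝓩 : Type*} [Fintype 𝓩] {S : Set (𝓩 → ℝ)}
    (hS : ∀ q ∈ S, (∀ z, 0 ≤ q z) ∧ ∑ z, q z = 1) :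
    ∀ q ∈ convexHull ℝ S, (∀ z, 0 ≤ q z) ∧ ∑ z, q z = 1 := by
  have hconv : Convex ℝ {q : 𝓩 → ℝ | (∀ z, 0 ≤ q z) ∧ ∑ z, q z = 1} := by
    intro q1 h1 q2 h2 a b ha hb hab
    refine ⟨fun z => ?_, ?_⟩
    · have g1 := h1.1 z; have g2 := h2.1 z
      simp only [Pi.add_apply, Pi.smul_apply, smul_eq_mul]
      positivity
    · simp only [Pi.add_apply, Pi.smul_apply, smul_eq_mul, Finset.sum_add_distrib,
        ← Finset.mul_sum, h1.2, h2.2]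
      linarith
  exact fun q hq => convexHull_min hS hconv hq

/-- Marginal `p(x)`. -/
noncomputable def margX (p : 𝓧 × 𝓨 × 𝓦 × 𝓩 → ℝ) (x : 𝓧) : ℝ :=
  ∑ y, ∑ w, ∑ z, p (x, y, w, z)

/-- Marginal `p(y)`. -/
noncomputable def margY (p : 𝓧 × 𝓨 × 𝓦 × 𝓩 → ℝ) (y : 𝓨) : ℝ :=
  ∑ x, ∑ w, ∑ z, p (x, y, w, z)

/-- Marginal `p(y,w)` of the joint variable `(Y,W)`. -/
noncomputable def margYW (p : 𝓧 × 𝓨 × 𝓦 × 𝓩 → ℝ) (y : 𝓨) (w : 𝓦) : ℝ :=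
  ∑ x, ∑ z, p (x, y, w, z)

/-- Marginal `p(z)`. -/
noncomputable def margZ (p : 𝓧 × 𝓨 × 𝓦 × 𝓩 → ℝ) (z : 𝓩) : ℝ :=
  ∑ x, ∑ y, ∑ w, p (x, y, w, z)

/-- Joint marginal `p(x,z)`. -/
noncomputable def margXZ (p : 𝓧 × 𝓨 × 𝓦 × 𝓩 → ℝ) (x : 𝓧) (z : 𝓩) : ℝ :=
  ∑ y, ∑ w, p (x, y, w, z)

/-- Joint marginal `p(y,z)`. -/
noncomputable def margYZ (p : 𝓧 × 𝓨 × 𝓦 × 𝓩 → ℝ) (y : 𝓨) (z : 𝓩) : ℝ :=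
  ∑ x, ∑ w, p (x, y, w, z)

/-- Joint marginal `p(y,w,z)`. -/
noncomputable def margYWZ (p : 𝓧 × 𝓨 × 𝓦 × 𝓩 → ℝ) (y : 𝓨) (w : 𝓦) (z : 𝓩) : ℝ :=
  ∑ x, p (x, y, w, z)

/-- Conditional distribution `p(·|x)` of `Z` given `X = x`. -/
noncomputable def condX (p : 𝓧 × 𝓨 × 𝓦 × 𝓩 → ℝ) (x : 𝓧) : 𝓩 → ℝ :=
  fun z => margXZ p x z / margX p x

/-- Conditional distribution `p(·|y)` of `Z` given `Y = y`. -/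
noncomputable def condY (p : 𝓧 × 𝓨 × 𝓦 × 𝓩 → ℝ) (y : 𝓨) : 𝓩 → ℝ :=
  fun z => margYZ p y z / margY p y

/-- Conditional distribution `p(·|y,w)` of `Z` given `(Y,W) = (y,w)`. -/
noncomputable def condYW (p : 𝓧 × 𝓨 × 𝓦 × 𝓩 → ℝ) (y : 𝓨) (w : 𝓦) : 𝓩 → ℝ :=
  fun z => margYWZ p y w z / margYW p y w

/-- `C_X`: convex hull of `{p(·|x) : p(x) > 0}`. -/
noncomputable def CXhull (p : 𝓧 × 𝓨 × 𝓦 × 𝓩 → ℝ) : Set (𝓩 → ℝ) :=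
  convexHull ℝ {q | ∃ x, 0 < margX p x ∧ q = condX p x}

/-- `C_Y`: convex hull of `{p(·|y) : p(y) > 0}`. -/
noncomputable def CYhull (p : 𝓧 × 𝓨 × 𝓦 × 𝓩 → ℝ) : Set (𝓩 → ℝ) :=
  convexHull ℝ {q | ∃ y, 0 < margY p y ∧ q = condY p y}

/-- `C_{(Y,W)}`: convex hull of `{p(·|y,w) : p(y,w) > 0}`. -/
noncomputable def CYWhull (p : 𝓧 × 𝓨 × 𝓦 × 𝓩 → ℝ) : Set (𝓩 → ℝ) :=
  convexHull ℝ {q | ∃ y w, 0 < margYW p y w ∧ q = condYW p y w}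

/-- Projected information `I_pr(X ↘ Y; Z)`. -/
noncomputable def IprXY (p : 𝓧 × 𝓨 × 𝓦 × 𝓩 → ℝ) : ℝ :=
  ∑ x, if 0 < margX p x then
      margX p x * ((klDiv (condX p x) (margZ p)).toReal -
        (⨅ q ∈ CYhull p, klDiv (condX p x) q).toReal)
    else 0

/-- Projected information `I_pr(X ↘ (Y,W); Z)`. -/
noncomputable def IprXYW (p : 𝓧 × 𝓨 × 𝓦 × 𝓩 → ℝ) : ℝ :=
  ∑ x, if 0 < margX p x then
      margX p x * ((klDiv (condX p x) (margZ p)).toReal -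
        (⨅ q ∈ CYWhull p, klDiv (condX p x) q).toReal)
    else 0

/-- Projected information `I_pr(Y ↘ X; Z)`. -/
noncomputable def IprYX (p : 𝓧 × 𝓨 × 𝓦 × 𝓩 → ℝ) : ℝ :=
  ∑ y, if 0 < margY p y then
      margY p y * ((klDiv (condY p y) (margZ p)).toReal -
        (⨅ q ∈ CXhull p, klDiv (condY p y) q).toReal)
    else 0

/-- Projected information `I_pr((Y,W) ↘ X; Z)`, treating `(Y,W)` as a single variable. -/
noncomputable def IprYWX (p : 𝓧 × 𝓨 × 𝓦 × 𝓩 → ℝ) : ℝ :=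
  ∑ y, ∑ w, if 0 < margYW p y w then
      margYW p y w * ((klDiv (condYW p y w) (margZ p)).toReal -
        (⨅ q ∈ CXhull p, klDiv (condYW p y w) q).toReal)
    else 0

/-- Redundant information `I_red(Z;X,Y)`. -/
noncomputable def IredXY (p : 𝓧 × 𝓨 × 𝓦 × 𝓩 → ℝ) : ℝ := min (IprXY p) (IprYX p)

/-- Redundant information `I_red(Z;X,(Y,W))`, treating `(Y,W)` as a single variable. -/
noncomputable def IredXYW (p : 𝓧 × 𝓨 × 𝓦 × 𝓩 → ℝ) : ℝ := min (IprXYW p) (IprYWX p)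


section PAux
set_option linter.unusedSectionVars false

variable (p : 𝓧 × 𝓨 × 𝓦 × 𝓩 → ℝ) (hp : IsPMF p)

lemma margXZ_nonneg (hp : IsPMF p) (x : 𝓧) (z : 𝓩) : 0 ≤ margXZ p x z :=
  Finset.sum_nonneg fun _ _ => Finset.sum_nonneg fun _ _ => hp.1 _

lemma margYZ_nonneg (hp : IsPMF p) (y : 𝓨) (z : 𝓩) : 0 ≤ margYZ p y z :=
  Finset.sum_nonneg fun _ _ => Finset.sum_nonneg fun _ _ => hp.1 _

lemma margYWZ_nonneg (hp : IsPMF p) (y : 𝓨) (w : 𝓦) (z : 𝓩) : 0 ≤ margYWZ p y w z :=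
  Finset.sum_nonneg fun _ _ => hp.1 _

lemma margYW_nonneg (hp : IsPMF p) (y : 𝓨) (w : 𝓦) : 0 ≤ margYW p y w :=
  Finset.sum_nonneg fun _ _ => Finset.sum_nonneg fun _ _ => hp.1 _

lemma margX_eq_sum (x : 𝓧) : margX p x = ∑ z, margXZ p x z := by
  unfold margX margXZ
  calc ∑ y, ∑ w, ∑ z, p (x, y, w, z) = ∑ y, ∑ z, ∑ w, p (x, y, w, z) :=
        Finset.sum_congr rfl fun y _ => Finset.sum_comm
    _ = ∑ z, ∑ y, ∑ w, p (x, y, w, z) := Finset.sum_comm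

lemma margY_eq_sum (y : 𝓨) : margY p y = ∑ z, margYZ p y z := by
  unfold margY margYZ
  calc ∑ x, ∑ w, ∑ z, p (x, y, w, z) = ∑ x, ∑ z, ∑ w, p (x, y, w, z) :=
        Finset.sum_congr rfl fun x _ => Finset.sum_comm
    _ = ∑ z, ∑ x, ∑ w, p (x, y, w, z) := Finset.sum_comm

lemma margYW_eq_sum (y : 𝓨) (w : 𝓦) : margYW p y w = ∑ z, margYWZ p y w z := by
  unfold margYW margYWZ
  exact Finset.sum_comm

lemma margY_eq_sum_w (y : 𝓨) : margY p y = ∑ w, margYW p y w := by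
  unfold margY margYW
  exact Finset.sum_comm

lemma margYZ_eq_sum_w (y : 𝓨) (z : 𝓩) : margYZ p y z = ∑ w, margYWZ p y w z := by
  unfold margYZ margYWZ
  exact Finset.sum_comm

lemma margZ_eq_sum_x (z : 𝓩) : margZ p z = ∑ x, margXZ p x z := rfl

lemma margZ_eq_sum_y (z : 𝓩) : margZ p z = ∑ y, margYZ p y z := by
  unfold margZ margYZ
  exact Finset.sum_comm

lemma margX_nonneg (hp : IsPMF p) (x : 𝓧) : 0 ≤ margX p x := by
  rw [margX_eq_sum]
  exact Finset.sum_nonneg fun z _ => margXZ_nonneg p hp x z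

lemma margY_nonneg (hp : IsPMF p) (y : 𝓨) : 0 ≤ margY p y := by
  rw [margY_eq_sum]
  exact Finset.sum_nonneg fun z _ => margYZ_nonneg p hp y z

lemma margXZ_eq_zero (hp : IsPMF p) {x : 𝓧} (hx : margX p x = 0) (z : 𝓩) :
    margXZ p x z = 0 := by
  have := (Finset.sum_eq_zero_iff_of_nonneg
    (fun z _ => margXZ_nonneg p hp x z)).1 ((margX_eq_sum p x).symm.trans hx)
  exact this z (Finset.mem_univ z)

lemma margYZ_eq_zero (hp : IsPMF p) {y : 𝓨} (hy : margY p y = 0) (z : 𝓩) :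
    margYZ p y z = 0 := by
  have := (Finset.sum_eq_zero_iff_of_nonneg
    (fun z _ => margYZ_nonneg p hp y z)).1 ((margY_eq_sum p y).symm.trans hy)
  exact this z (Finset.mem_univ z)

lemma margYWZ_eq_zero (hp : IsPMF p) {y : 𝓨} {w : 𝓦} (hyw : margYW p y w = 0) (z : 𝓩) :
    margYWZ p y w z = 0 := by
  have := (Finset.sum_eq_zero_iff_of_nonneg
    (fun z _ => margYWZ_nonneg p hp y w z)).1 ((margYW_eq_sum p y w).symm.trans hyw)
  exact this z (Finset.mem_univ z)

lemma margYW_eq_zero (hp : IsPMF p) {y : 𝓨} (hy : margY p y = 0) (w : 𝓦) :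
    margYW p y w = 0 := by
  have := (Finset.sum_eq_zero_iff_of_nonneg
    (fun w _ => margYW_nonneg p hp y w)).1 ((margY_eq_sum_w p y).symm.trans hy)
  exact this w (Finset.mem_univ w)

lemma sum_margX (hp : IsPMF p) : ∑ x, margX p x = 1 := by
  rw [← hp.2, Fintype.sum_prod_type]
  refine Finset.sum_congr rfl fun x _ => ?_
  rw [Fintype.sum_prod_type]
  refine Finset.sum_congr rfl fun y _ => ?_
  rw [Fintype.sum_prod_type]

lemma sum_margY (hp : IsPMF p) : ∑ y, margY p y = 1 := by
  rw [← sum_margX p hp]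
  unfold margX margY
  exact Finset.sum_comm

lemma margY_le_one (hp : IsPMF p) (y : 𝓨) : margY p y ≤ 1 := by
  rw [← sum_margY p hp]
  exact Finset.single_le_sum (fun y _ => margY_nonneg p hp y) (Finset.mem_univ y)

-- support / absolute continuity lemmas

lemma margZ_pos_of_margXZ (hp : IsPMF p) {x : 𝓧} {z : 𝓩} (h : 0 < margXZ p x z) :
    0 < margZ p z := by
  rw [margZ_eq_sum_x]
  exact lt_of_lt_of_le h (Finset.single_le_sum
    (fun x _ => margXZ_nonneg p hp x z) (Finset.mem_univ x))

lemma margZ_pos_of_margYZ (hp : IsPMF p) {y : 𝓨} {z : 𝓩} (h : 0 < margYZ p y z) :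
    0 < margZ p z := by
  rw [margZ_eq_sum_y]
  exact lt_of_lt_of_le h (Finset.single_le_sum
    (fun y _ => margYZ_nonneg p hp y z) (Finset.mem_univ y))

lemma margYZ_pos_of_margYWZ (hp : IsPMF p) {y : 𝓨} {w : 𝓦} {z : 𝓩}
    (h : 0 < margYWZ p y w z) : 0 < margYZ p y z := by
  rw [margYZ_eq_sum_w]
  exact lt_of_lt_of_le h (Finset.single_le_sum
    (fun w _ => margYWZ_nonneg p hp y w z) (Finset.mem_univ w))

lemma condX_pos_elim {x : 𝓧} {z : 𝓩} (hx : 0 < margX p x) (h : 0 < condX p x z) :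
    0 < margXZ p x z := by
  have h2 := mul_pos h hx
  rwa [condX, div_mul_cancel₀ _ hx.ne'] at h2

lemma condY_pos_elim {y : 𝓨} {z : 𝓩} (hy : 0 < margY p y) (h : 0 < condY p y z) :
    0 < margYZ p y z := by
  have h2 := mul_pos h hy
  rwa [condY, div_mul_cancel₀ _ hy.ne'] at h2

lemma condYW_pos_elim {y : 𝓨} {w : 𝓦} {z : 𝓩} (hyw : 0 < margYW p y w)
    (h : 0 < condYW p y w z) : 0 < margYWZ p y w z := by
  have h2 := mul_pos h hyw
  rwa [condYW, div_mul_cancel₀ _ hyw.ne'] at h2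

lemma acX (hp : IsPMF p) {x : 𝓧} (hx : 0 < margX p x) :
    ∀ z, 0 < condX p x z → 0 < margZ p z :=
  fun _ h => margZ_pos_of_margXZ p hp (condX_pos_elim p hx h)

lemma acY (hp : IsPMF p) {y : 𝓨} (hy : 0 < margY p y) :
    ∀ z, 0 < condY p y z → 0 < margZ p z :=
  fun _ h => margZ_pos_of_margYZ p hp (condY_pos_elim p hy h)

lemma acYW (hp : IsPMF p) {y : 𝓨} {w : 𝓦} (hyw : 0 < margYW p y w) :
    ∀ z, 0 < condYW p y w z → 0 < margZ p z :=
  fun _ h => margZ_pos_of_margYZ p hp (margYZ_pos_of_margYWZ p hp (condYW_pos_elim p hyw h))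

lemma condYW_to_condY (hp : IsPMF p) {y : 𝓨} {w : 𝓦} (hy : 0 < margY p y)
    (hyw : 0 < margYW p y w) : ∀ z, 0 < condYW p y w z → 0 < condY p y z := by
  intro z h
  have h2 := margYZ_pos_of_margYWZ p hp (condYW_pos_elim p hyw h)
  exact div_pos h2 hy

-- conditional distributions are pmfs

lemma condX_pmf (hp : IsPMF p) {x : 𝓧} (hx : 0 < margX p x) :
    (∀ z, 0 ≤ condX p x z) ∧ ∑ z, condX p x z = 1 := by
  constructor
  · intro z; exact div_nonneg (margXZ_nonneg p hp x z) hx.le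
  · rw [show (∑ z, condX p x z) = (∑ z, margXZ p x z) / margX p x from
      (Finset.sum_div _ _ _).symm, ← margX_eq_sum, div_self hx.ne']

lemma condY_pmf (hp : IsPMF p) {y : 𝓨} (hy : 0 < margY p y) :
    (∀ z, 0 ≤ condY p y z) ∧ ∑ z, condY p y z = 1 := by
  constructor
  · intro z; exact div_nonneg (margYZ_nonneg p hp y z) hy.le
  · rw [show (∑ z, condY p y z) = (∑ z, margYZ p y z) / margY p y from
      (Finset.sum_div _ _ _).symm, ← margY_eq_sum, div_self hy.ne']

lemma condYW_pmf (hp : IsPMF p) {y : 𝓨} {w : 𝓦} (hyw : 0 < margYW p y w) :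
    (∀ z, 0 ≤ condYW p y w z) ∧ ∑ z, condYW p y w z = 1 := by
  constructor
  · intro z; exact div_nonneg (margYWZ_nonneg p hp y w z) hyw.le
  · rw [show (∑ z, condYW p y w z) = (∑ z, margYWZ p y w z) / margYW p y w from
      (Finset.sum_div _ _ _).symm, ← margYW_eq_sum, div_self hyw.ne']

lemma EReal_ne_bot_of_nonneg {a : EReal} (h : (0:EReal) ≤ a) : a ≠ ⊥ := by
  intro hb; rw [hb] at h; simp at h

lemma margZ_mem_CX (hp : IsPMF p) : margZ p ∈ CXhull p := by
  refine mem_hull_of_rep (g := margX p) (f := condX p) (margX_nonneg p hp) (sum_margX p hp)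
    (fun x hx => ⟨x, hx, rfl⟩) (fun z => ?_)
  rw [margZ_eq_sum_x]
  refine Finset.sum_congr rfl fun x _ => ?_
  rcases eq_or_lt_of_le (margX_nonneg p hp x) with h | h
  · rw [margXZ_eq_zero p hp h.symm, ← h, zero_mul]
  · show margXZ p x z = margX p x * (margXZ p x z / margX p x)
    field_simp

lemma margZ_mem_CY (hp : IsPMF p) : margZ p ∈ CYhull p := by
  refine mem_hull_of_rep (g := margY p) (f := condY p) (margY_nonneg p hp) (sum_margY p hp)
    (fun y hy => ⟨y, hy, rfl⟩) (fun z => ?_)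
  rw [margZ_eq_sum_y]
  refine Finset.sum_congr rfl fun y _ => ?_
  rcases eq_or_lt_of_le (margY_nonneg p hp y) with h | h
  · rw [margYZ_eq_zero p hp h.symm, ← h, zero_mul]
  · show margYZ p y z = margY p y * (margYZ p y z / margY p y)
    field_simp

lemma condY_mem_CYW (hp : IsPMF p) {y : 𝓨} (hy : 0 < margY p y) :
    condY p y ∈ CYWhull p := by
  refine mem_hull_of_rep (g := fun w => margYW p y w / margY p y) (f := condYW p y)
    (fun w => div_nonneg (margYW_nonneg p hp y w) hy.le)
    (by rw [← Finset.sum_div, ← margY_eq_sum_w, div_self hy.ne'])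
    (fun w hw => ?_) (fun z => ?_)
  · have hyw : 0 < margYW p y w := by
      have h2 := mul_pos hw hy
      rwa [div_mul_cancel₀ _ hy.ne'] at h2
    exact ⟨y, w, hyw, rfl⟩
  · show margYZ p y z / margY p y = _
    rw [margYZ_eq_sum_w, Finset.sum_div]
    refine Finset.sum_congr rfl fun w _ => ?_
    rcases eq_or_lt_of_le (margYW_nonneg p hp y w) with h | h
    · simp only [margYWZ_eq_zero p hp h.symm, ← h, zero_div, zero_mul]
    · show margYWZ p y w z / margY p y
        = margYW p y w / margY p y * (margYWZ p y w z / margYW p y w)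
      rw [div_mul_div_comm, mul_comm (margYW p y w), mul_div_mul_right _ _ h.ne']

lemma CY_subset_CYW (hp : IsPMF p) : CYhull p ⊆ CYWhull p := by
  refine convexHull_min ?_ (convex_convexHull ℝ _)
  rintro q ⟨y, hy, rfl⟩
  exact condY_mem_CYW p hp hy

lemma CXhull_pmf (hp : IsPMF p) : ∀ q ∈ CXhull p, (∀ z, 0 ≤ q z) ∧ ∑ z, q z = 1 :=
  hull_pmf (by rintro q ⟨x, hx, rfl⟩; exact condX_pmf p hp hx)

lemma CYhull_pmf (hp : IsPMF p) : ∀ q ∈ CYhull p, (∀ z, 0 ≤ q z) ∧ ∑ z, q z = 1 :=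
  hull_pmf (by rintro q ⟨y, hy, rfl⟩; exact condY_pmf p hp hy)

lemma CYWhull_pmf (hp : IsPMF p) : ∀ q ∈ CYWhull p, (∀ z, 0 ≤ q z) ∧ ∑ z, q z = 1 :=
  hull_pmf (by rintro q ⟨y, w, hyw, rfl⟩; exact condYW_pmf p hp hyw)

lemma keyY (hp : IsPMF p) {y : 𝓨} (hy : 0 < margY p y) {q : 𝓩 → ℝ}
    (hq : ∀ z, 0 < condY p y z → 0 < q z) :
    margY p y * ((klDiv (condY p y) (margZ p)).toReal - (klDiv (condY p y) q).toReal)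
      = ∑ z, margYZ p y z * Real.log (q z / margZ p z) := by
  rw [klDiv_sub (condY_pmf p hp hy).1 hq (acY p hp hy), Finset.mul_sum]
  refine Finset.sum_congr rfl fun z _ => ?_
  show margY p y * (margYZ p y z / margY p y * Real.log (q z / margZ p z)) = _
  rw [← mul_assoc, mul_div_cancel₀ _ hy.ne']

lemma keyYW (hp : IsPMF p) {y : 𝓨} {w : 𝓦} (hyw : 0 < margYW p y w) {q : 𝓩 → ℝ}
    (hq : ∀ z, 0 < condYW p y w z → 0 < q z) :
    margYW p y w * ((klDiv (condYW p y w) (margZ p)).toReal - (klDiv (condYW p y w) q).toReal)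
      = ∑ z, margYWZ p y w z * Real.log (q z / margZ p z) := by
  rw [klDiv_sub (condYW_pmf p hp hyw).1 hq (acYW p hp hyw), Finset.mul_sum]
  refine Finset.sum_congr rfl fun z _ => ?_
  show margYW p y w * (margYWZ p y w z / margYW p y w * Real.log (q z / margZ p z)) = _
  rw [← mul_assoc, mul_div_cancel₀ _ hyw.ne']

lemma Ipr_part1 (hp : IsPMF p) : IprXY p ≤ IprXYW p := by
  unfold IprXY IprXYW
  refine Finset.sum_le_sum fun x _ => ?_
  by_cases hx : 0 < margX p x
  · rw [if_pos hx, if_pos hx]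
    have hactop : klDiv (condX p x) (margZ p) ≠ ⊤ := by
      rw [klDiv_of_ac (acX p hp hx)]; exact EReal.coe_ne_top _
    have hle : (⨅ q ∈ CYWhull p, klDiv (condX p x) q) ≤ ⨅ q ∈ CYhull p, klDiv (condX p x) q :=
      iInf_le_iInf_of_subset (CY_subset_CYW p hp)
    have h0 : (0:EReal) ≤ ⨅ q ∈ CYWhull p, klDiv (condX p x) q :=
      le_iInf₂ fun q hq => klDiv_nonneg (condX_pmf p hp hx).1 (condX_pmf p hp hx).2
        (CYWhull_pmf p hp q hq).1 (CYWhull_pmf p hp q hq).2.le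
    have htop : (⨅ q ∈ CYhull p, klDiv (condX p x) q) ≠ ⊤ :=
      ne_top_of_le_ne_top hactop (iInf₂_le _ (margZ_mem_CY p hp))
    have h2 := EReal.toReal_le_toReal hle (EReal_ne_bot_of_nonneg h0) htop
    exact mul_le_mul_of_nonneg_left (by linarith) hx.le
  · rw [if_neg hx, if_neg hx]

lemma Ipr_part2_y (hp : IsPMF p) (y : 𝓨) :
    (if 0 < margY p y then
      margY p y * ((klDiv (condY p y) (margZ p)).toReal -
        (⨅ q ∈ CXhull p, klDiv (condY p y) q).toReal)
    else 0) ≤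
    ∑ w, if 0 < margYW p y w then
      margYW p y w * ((klDiv (condYW p y w) (margZ p)).toReal -
        (⨅ q ∈ CXhull p, klDiv (condYW p y w) q).toReal)
    else 0 := by
  by_cases hy : 0 < margY p y
  case neg =>
    rw [if_neg hy]
    have hy0 : margY p y = 0 := le_antisymm (not_lt.1 hy) (margY_nonneg p hp y)
    have hw : ∀ w, ¬ 0 < margYW p y w := fun w => by
      rw [margYW_eq_zero p hp hy0 w]; exact lt_irrefl 0
    simp [hw]
  case pos =>
    rw [if_pos hy]
    have hcondY := condY_pmf p hp hy
    set m := ⨅ q ∈ CXhull p, klDiv (condY p y) q with hmdef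
    have hm0 : (0:EReal) ≤ m :=
      le_iInf₂ fun q hq => klDiv_nonneg hcondY.1 hcondY.2
        (CXhull_pmf p hp q hq).1 (CXhull_pmf p hp q hq).2.le
    have hmtop : m ≠ ⊤ :=
      ne_top_of_le_ne_top (by rw [klDiv_of_ac (acY p hp hy)]; exact EReal.coe_ne_top _)
        (iInf₂_le _ (margZ_mem_CX p hp))
    have hmbot : m ≠ ⊥ := EReal_ne_bot_of_nonneg hm0
    refine le_of_forall_pos_le_add fun ε hε => ?_
    have hlt : m < ((m.toReal + ε : ℝ) : EReal) := by
      nth_rewrite 1 [← EReal.coe_toReal hmtop hmbot]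
      exact_mod_cast (by linarith : m.toReal < m.toReal + ε)
    rw [hmdef] at hlt
    simp only [iInf_lt_iff] at hlt
    obtain ⟨q, hqmem, hqlt⟩ := hlt
    have hqpmf := CXhull_pmf p hp q hqmem
    have hacq : ∀ z, 0 < condY p y z → 0 < q z :=
      ac_of_ne_top (hqlt.trans (EReal.coe_lt_top _)).ne
    have hq0 : (0:EReal) ≤ klDiv (condY p y) q :=
      klDiv_nonneg hcondY.1 hcondY.2 hqpmf.1 hqpmf.2.le
    set r := (klDiv (condY p y) q).toReal with hrdef
    have hr : klDiv (condY p y) q = (r : EReal) :=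
      (EReal.coe_toReal (by rw [klDiv_of_ac hacq]; exact EReal.coe_ne_top _)
        (EReal_ne_bot_of_nonneg hq0)).symm
    have hrlt : r < m.toReal + ε := by
      rw [hr] at hqlt; exact_mod_cast hqlt
    have key1 := keyY p hp hy hacq
    have key2 : ∀ w, (∑ z, margYWZ p y w z * Real.log (q z / margZ p z)) ≤
        (if 0 < margYW p y w then
          margYW p y w * ((klDiv (condYW p y w) (margZ p)).toReal -
            (⨅ q' ∈ CXhull p, klDiv (condYW p y w) q').toReal)
        else 0) := by
      intro w
      by_cases hyw : 0 < margYW p y w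
      · rw [if_pos hyw]
        have hacqw : ∀ z, 0 < condYW p y w z → 0 < q z :=
          fun z h => hacq z (condYW_to_condY p hp hy hyw z h)
        rw [← keyYW p hp hyw hacqw]
        have hmw0 : (0:EReal) ≤ ⨅ q' ∈ CXhull p, klDiv (condYW p y w) q' :=
          le_iInf₂ fun q' hq' => klDiv_nonneg (condYW_pmf p hp hyw).1 (condYW_pmf p hp hyw).2
            (CXhull_pmf p hp q' hq').1 (CXhull_pmf p hp q' hq').2.le
        have hlew : (⨅ q' ∈ CXhull p, klDiv (condYW p y w) q') ≤ klDiv (condYW p y w) q :=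
          iInf₂_le q hqmem
        have hqwtop : klDiv (condYW p y w) q ≠ ⊤ := by
          rw [klDiv_of_ac hacqw]; exact EReal.coe_ne_top _
        have h3 := EReal.toReal_le_toReal hlew (EReal_ne_bot_of_nonneg hmw0) hqwtop
        exact mul_le_mul_of_nonneg_left (by linarith) hyw.le
      · rw [if_neg hyw]
        have hyw0 : margYW p y w = 0 := le_antisymm (not_lt.1 hyw) (margYW_nonneg p hp y w)
        exact le_of_eq (Finset.sum_eq_zero fun z _ => by
          rw [margYWZ_eq_zero p hp hyw0, zero_mul])
    have hswap : (∑ z, margYZ p y z * Real.log (q z / margZ p z))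
        = ∑ w, ∑ z, margYWZ p y w z * Real.log (q z / margZ p z) := by
      rw [Finset.sum_comm]
      refine Finset.sum_congr rfl fun z _ => ?_
      rw [margYZ_eq_sum_w, Finset.sum_mul]
    calc margY p y * ((klDiv (condY p y) (margZ p)).toReal - m.toReal)
        ≤ margY p y * ((klDiv (condY p y) (margZ p)).toReal - r) + margY p y * ε := by
          nlinarith [margY_nonneg p hp y]
      _ = (∑ w, ∑ z, margYWZ p y w z * Real.log (q z / margZ p z)) + margY p y * ε := by
          rw [key1, hswap]
      _ ≤ (∑ w, if 0 < margYW p y w then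
              margYW p y w * ((klDiv (condYW p y w) (margZ p)).toReal -
                (⨅ q' ∈ CXhull p, klDiv (condYW p y w) q').toReal)
            else 0) + margY p y * ε :=
          add_le_add_left (Finset.sum_le_sum fun w _ => key2 w) _
      _ ≤ _ + ε := by nlinarith [mul_le_mul_of_nonneg_right (margY_le_one p hp y) hε.le]

lemma Ipr_part2 (hp : IsPMF p) : IprYX p ≤ IprYWX p := by
  unfold IprYX IprYWX
  exact Finset.sum_le_sum fun y _ => Ipr_part2_y p hp y

end PAux

/-- Monotonicity of redundant information: `I_red(Z;X,Y) ≤ I_red(Z;X,(Y,W))`,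
where on the right `(Y,W)` is treated as a single variable. -/
theorem Ired_monotone
    [Nonempty 𝓧] [Nonempty 𝓨] [Nonempty 𝓦] [Nonempty 𝓩]
    (p : 𝓧 × 𝓨 × 𝓦 × 𝓩 → ℝ) (hp : IsPMF p) :
    IredXY p ≤ IredXYW p :=
  min_le_min (Ipr_part1 p hp) (Ipr_part2 p hp)
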